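/- The posterior expectation identity: for the bridge marginal q_t with Gaussian conditional q_t(x|x0,x1) = N(t x1 + (1-t)x0, t(1-t)σ²I), the marginal score decomposes as ∇log q_t(x) = (1/σ²)·(E_{q_t(·,·|x)}[(X1-x)/(1-t)] - E_{q_t(·,·|x)}[(x-X0)/t]). -/

import Mathlib

open Real MeasureTheory

/-- Gaussian density on `ℝ^d` with mean `m` and covariance `v • I`. -/
noncomputable def gauss (d : ℕ) (m : EuclideanSpace ℝ (Fin d)) (v : ℝ)
    (x : EuclideanSpace ℝ (Fin d)) : ℝ :=
  (2 * π * v) ^ (-(d : ℝ) / 2) * Real.exp (-‖x - m‖ ^ 2 / (2 * v))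

lemma gauss_hasGradientAt (d : ℕ) (m : EuclideanSpace ℝ (Fin d)) (v : ℝ)
    (x : EuclideanSpace ℝ (Fin d)) :
    HasGradientAt (gauss d m v) ((-(v⁻¹ * gauss d m v x)) • (x - m)) x := by
  have h1 : HasFDerivAt (fun y : EuclideanSpace ℝ (Fin d) => ‖y - m‖ ^ 2)
      (2 • (innerSL ℝ (x - m))) x := by
    simpa using ((hasFDerivAt_id x).sub_const m).norm_sq
  have h2 : HasFDerivAt (fun y : EuclideanSpace ℝ (Fin d) => -‖y - m‖ ^ 2 / (2 * v))
      ((-(2 * v)⁻¹) • (2 • (innerSL ℝ (x - m)))) x := by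
    have h := h1.const_smul (-(2 * v)⁻¹)
    have heq : (fun y : EuclideanSpace ℝ (Fin d) => (-(2 * v)⁻¹) • ‖y - m‖ ^ 2)
        = fun y : EuclideanSpace ℝ (Fin d) => -‖y - m‖ ^ 2 / (2 * v) := by
      funext y; simp [smul_eq_mul, div_eq_mul_inv]; ring
    rw [← heq]; exact h
  have h3 := h2.exp
  have h4 := h3.const_mul ((2 * π * v) ^ (-(d : ℝ) / 2))
  rw [hasGradientAt_iff_hasFDerivAt]
  refine h4.congr_fderiv ?_
  ext y
  simp [gauss, real_inner_smul_left, smul_smul]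
  ring

/-- Posterior expectation identity: for the bridge marginal `q_t` with Gaussian conditional
`q_t(x|x0,x1) = N(t·x1+(1-t)·x0, t(1-t)σ²I)`, the marginal score decomposes as
`∇log q_t(x) = (1/σ²)(E_{q_t(·,·|x)}[(X1-x)/(1-t)] - E_{q_t(·,·|x)}[(x-X0)/t])`. -/
theorem marginal_score_posterior_decomposition
    (d : ℕ) (σ : ℝ) (hσ : 0 < σ) (t : ℝ) (ht : t ∈ Set.Ioo (0 : ℝ) 1)
    (qjoint : EuclideanSpace ℝ (Fin d) × EuclideanSpace ℝ (Fin d) → ℝ)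
    (qcond : EuclideanSpace ℝ (Fin d) →
      EuclideanSpace ℝ (Fin d) × EuclideanSpace ℝ (Fin d) → ℝ)
    (hqcond : ∀ y p, qcond y p = gauss d (t • p.2 + (1 - t) • p.1) (t * (1 - t) * σ ^ 2) y)
    (qt : EuclideanSpace ℝ (Fin d) → ℝ)
    (hqt : ∀ y, qt y = ∫ p, qcond y p * qjoint p)
    (hjpos : ∀ p, 0 < qjoint p)
    (hqtpos : ∀ y, 0 < qt y)
    (x : EuclideanSpace ℝ (Fin d))
    (hqtdiff : DifferentiableAt ℝ qt x)
    -- regularity: differentiation under the integral sign is valid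
    (hswap : gradient qt x = ∫ p, qjoint p • gradient (fun y => qcond y p) x)
    (hint : Integrable (fun p => qjoint p • gradient (fun y => qcond y p) x))
    (hint1 : Integrable (fun p =>
      (qcond x p * qjoint p / qt x) • ((1 - t)⁻¹ • (p.2 - x))))
    (hint0 : Integrable (fun p =>
      (qcond x p * qjoint p / qt x) • (t⁻¹ • (x - p.1)))) :
    gradient (fun y => Real.log (qt y)) x
      = (σ ^ 2)⁻¹ •
        ((∫ p, (qcond x p * qjoint p / qt x) • ((1 - t)⁻¹ • (p.2 - x)))
          - ∫ p, (qcond x p * qjoint p / qt x) • (t⁻¹ • (x - p.1))) := by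
  obtain ⟨ht0, ht1⟩ := ht
  have ht1' : (0 : ℝ) < 1 - t := by linarith
  set v : ℝ := t * (1 - t) * σ ^ 2 with hv
  have hvpos : 0 < v := by positivity
  -- gradient of log qt
  have hqtne : qt x ≠ 0 := ne_of_gt (hqtpos x)
  have hgqt : HasGradientAt qt (gradient qt x) x := hqtdiff.hasGradientAt
  have hlog : HasGradientAt (fun y => Real.log (qt y)) ((qt x)⁻¹ • gradient qt x) x := by
    have hF : HasFDerivAt qt (InnerProductSpace.toDual ℝ _ (gradient qt x)) x :=
      hgqt.hasFDerivAt
    have := hF.log hqtne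
    rw [hasGradientAt_iff_hasFDerivAt]
    refine this.congr_fderiv ?_
    exact (map_smul (InnerProductSpace.toDual ℝ (EuclideanSpace ℝ (Fin d))) _ _).symm
  -- gradient of qcond
  have hgrad : ∀ p, gradient (fun y => qcond y p) x
      = (-(v⁻¹ * qcond x p)) • (x - (t • p.2 + (1 - t) • p.1)) := by
    intro p
    have heq : (fun y => qcond y p) = gauss d (t • p.2 + (1 - t) • p.1) v := by
      funext y; rw [hqcond]
    rw [heq, (gauss_hasGradientAt d _ v x).gradient, ← hqcond]
  have key : ∀ p : EuclideanSpace ℝ (Fin d) × EuclideanSpace ℝ (Fin d),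
      (qt x)⁻¹ • (qjoint p • gradient (fun y => qcond y p) x)
        = (σ ^ 2)⁻¹ • ((qcond x p * qjoint p / qt x) • ((1 - t)⁻¹ • (p.2 - x))
            - (qcond x p * qjoint p / qt x) • (t⁻¹ • (x - p.1))) := by
    intro p
    rw [hgrad p, hv]
    match_scalars <;> field_simp <;> ring
  calc gradient (fun y => Real.log (qt y)) x
      = (qt x)⁻¹ • gradient qt x := hlog.gradient
    _ = (qt x)⁻¹ • ∫ p, qjoint p • gradient (fun y => qcond y p) x := by rw [hswap]
    _ = ∫ p, (qt x)⁻¹ • (qjoint p • gradient (fun y => qcond y p) x) :=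
        (integral_smul _ _).symm
    _ = ∫ p, (σ ^ 2)⁻¹ • ((qcond x p * qjoint p / qt x) • ((1 - t)⁻¹ • (p.2 - x))
            - (qcond x p * qjoint p / qt x) • (t⁻¹ • (x - p.1))) := by
        simp_rw [key]
    _ = (σ ^ 2)⁻¹ • ∫ p, ((qcond x p * qjoint p / qt x) • ((1 - t)⁻¹ • (p.2 - x))
            - (qcond x p * qjoint p / qt x) • (t⁻¹ • (x - p.1))) := integral_smul _ _
    _ = _ := by rw [integral_sub hint1 hint0]
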